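/- Let k be a field of characteristic 0, n ≥ 1, and d ≥ 0. Let V be the k-vector space with basis {v_{i,j} : 1 ≤ i, 1 ≤ j ≤ n}, and let ω be the n-linear form ω = Σ_{i≥1} x_{i,1} ⊗ ⋯ ⊗ x_{i,n}, where x_{i,j} is dual to v_{i,j}. Then for every d-dimensional vector space W with an n-linear form η, setting m = d^n + d, there exists an injective linear map ι : W → V_m (the span of v_{i,j} with i ≤ m) such that the restriction of ω to V_m pulls back along ι to η. -/

import Mathlib

open Finset

section Aux
variable {k : Type} [Field k] {n d : ℕ} {W : Type} [AddCommGroup W] [Module k W]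

/-- coefficient linear functionals of the embedding -/
noncomputable def gCoef (b : Module.Basis (Fin d) k W) (η : MultilinearMap k (fun _ : Fin n => W) k)
    (hn : 0 < n) (i : ℕ) (j : Fin n) : W →ₗ[k] k :=
  if h : i < d ^ n then
    (if j = ⟨0, hn⟩ then (η (b ∘ (finFunctionFinEquiv.symm ⟨i, h⟩)) - (if n = 1 then 1 else 0)) else 1) •
      b.coord (finFunctionFinEquiv.symm ⟨i, h⟩ j)
  else if h2 : i - d ^ n < d then
    (if j = ⟨0, hn⟩ then b.coord ⟨i - d ^ n, h2⟩ else 0)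
  else 0

theorem gCoef_eq_zero (b : Module.Basis (Fin d) k W) (η : MultilinearMap k (fun _ : Fin n => W) k)
    (hn : 0 < n) {i : ℕ} (hi : d ^ n + d ≤ i) (j : Fin n) : gCoef b η hn i j = 0 := by
  have h1 : ¬ i < d ^ n := by omega
  have h2 : ¬ i - d ^ n < d := by omega
  simp [gCoef, h1, h2]

theorem gCoef_main (b : Module.Basis (Fin d) k W) (η : MultilinearMap k (fun _ : Fin n => W) k)
    (hn : 0 < n) (f : Fin n → Fin d) (j : Fin n) :
    gCoef b η hn ((finFunctionFinEquiv f : Fin (d ^ n)) : ℕ) j =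
      (if j = ⟨0, hn⟩ then (η (b ∘ f) - (if n = 1 then 1 else 0)) else 1) • b.coord (f j) := by
  have h : ((finFunctionFinEquiv f : Fin (d ^ n)) : ℕ) < d ^ n := (finFunctionFinEquiv f).isLt
  rw [gCoef, dif_pos h]
  have he : (finFunctionFinEquiv.symm ⟨((finFunctionFinEquiv f : Fin (d ^ n)) : ℕ), h⟩) = f := by
    rw [Fin.eta, Equiv.symm_apply_apply]
  rw [he]

theorem gCoef_tail (b : Module.Basis (Fin d) k W) (η : MultilinearMap k (fun _ : Fin n => W) k)
    (hn : 0 < n) (t : Fin d) (j : Fin n) :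
    gCoef b η hn (d ^ n + (t : ℕ)) j = if j = ⟨0, hn⟩ then b.coord t else 0 := by
  have ht := t.isLt
  have h1 : ¬ d ^ n + (t : ℕ) < d ^ n := by omega
  have h2 : d ^ n + (t : ℕ) - d ^ n < d := by omega
  rw [gCoef, dif_neg h1, dif_pos h2]
  have : (⟨d ^ n + (t : ℕ) - d ^ n, h2⟩ : Fin d) = t := by ext; simp
  rw [this]

noncomputable def iotaMap (b : Module.Basis (Fin d) k W) (η : MultilinearMap k (fun _ : Fin n => W) k)
    (hn : 0 < n) : W →ₗ[k] ((ℕ × Fin n) →₀ k) where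
  toFun v := Finsupp.onFinset (Finset.range (d ^ n + d) ×ˢ Finset.univ)
    (fun p => gCoef b η hn p.1 p.2 v) (by
      intro p hp
      simp only [Finset.mem_product, Finset.mem_range, Finset.mem_univ, and_true]
      by_contra hlt
      push_neg at hlt
      simp only [gCoef_eq_zero b η hn hlt p.2] at hp
      simp at hp)
  map_add' x y := by ext p; simp
  map_smul' c x := by ext p; simp

theorem iotaMap_support_subset (b : Module.Basis (Fin d) k W) (η : MultilinearMap k (fun _ : Fin n => W) k)
    (hn : 0 < n) (v : W) :
    (iotaMap b η hn v).support ⊆ Finset.range (d ^ n + d) ×ˢ Finset.univ := by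
  intro p hp
  simp only [Finsupp.mem_support_iff] at hp
  simp only [Finset.mem_product, Finset.mem_range, Finset.mem_univ, and_true]
  by_contra hlt
  push_neg at hlt
  apply hp
  show gCoef b η hn p.1 p.2 v = 0
  rw [gCoef_eq_zero b η hn hlt p.2]
  simp

theorem iotaMap_apply (b : Module.Basis (Fin d) k W) (η : MultilinearMap k (fun _ : Fin n => W) k)
    (hn : 0 < n) (v : W) (p : ℕ × Fin n) :
    iotaMap b η hn v p = gCoef b η hn p.1 p.2 v := rfl

theorem eta_expansion (b : Module.Basis (Fin d) k W) (η : MultilinearMap k (fun _ : Fin n => W) k)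
    (w : Fin n → W) :
    η w = ∑ f : Fin n → Fin d, (∏ j, b.repr (w j) (f j)) * η (b ∘ f) := by
  classical
  conv_lhs => rw [show w = fun j => ∑ t : Fin d, b.repr (w j) t • b t from
    funext fun j => (b.sum_repr (w j)).symm]
  rw [MultilinearMap.map_sum]
  refine Finset.sum_congr rfl fun f _ => ?_
  rw [MultilinearMap.map_smul_univ]
  rw [smul_eq_mul]
  rfl

end Aux

/-- the explicit form `ω = Σ_{i} x_{i,1} ⊗ ⋯ ⊗ x_{i,n}` on the space with
basis indexed by `ℕ × Fin n`; every `d`-dimensional space with an `n`-linear form embeds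
into the span of the basis vectors with first index `< d^n + d`. -/
theorem stmt_0 (k : Type) [Field k] [CharZero k] (n d : ℕ) (hn : 1 ≤ n)
    (W : Type) [AddCommGroup W] [Module k W] [FiniteDimensional k W]
    (hd : Module.finrank k W = d)
    (η : MultilinearMap k (fun _ : Fin n => W) k) :
    ∃ ι : W →ₗ[k] ((ℕ × Fin n) →₀ k),
      Function.Injective ι ∧
      LinearMap.range ι ≤ Submodule.span k
        {x : (ℕ × Fin n) →₀ k |
          ∃ i : ℕ, ∃ j : Fin n, i < d ^ n + d ∧ x = Finsupp.single (i, j) (1 : k)} ∧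
      ∀ w : Fin n → W, (∑ᶠ i : ℕ, ∏ j : Fin n, (ι (w j)) (i, j)) = η w := by
  classical
  have hn0 : 0 < n := hn
  obtain ⟨b⟩ : Nonempty (Module.Basis (Fin d) k W) := ⟨Module.finBasisOfFinrankEq k W hd⟩
  refine ⟨iotaMap b η hn0, ?_, ?_, ?_⟩
  · rw [← LinearMap.ker_eq_bot, LinearMap.ker_eq_bot']
    intro v hv
    apply b.repr.injective
    rw [map_zero]
    ext t
    have h := DFunLike.congr_fun hv (d ^ n + (t : ℕ), (⟨0, hn0⟩ : Fin n))
    rw [iotaMap_apply] at h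
    simp only [gCoef_tail b η hn0 t, if_pos rfl, Module.Basis.coord_apply, Finsupp.coe_zero,
      Pi.zero_apply] at h
    simpa using h
  · rintro x ⟨v, rfl⟩
    rw [← Finsupp.sum_single (iotaMap b η hn0 v), Finsupp.sum]
    apply Submodule.sum_mem
    intro p hp
    have hp1 : p.1 < d ^ n + d := by
      have := iotaMap_support_subset b η hn0 v hp
      simp only [Finset.mem_product, Finset.mem_range, Finset.mem_univ, and_true] at this
      exact this
    have : Finsupp.single p (iotaMap b η hn0 v p) =
        (iotaMap b η hn0 v p) • Finsupp.single p (1 : k) := by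
      rw [Finsupp.smul_single, smul_eq_mul, mul_one]
    rw [this]
    exact Submodule.smul_mem _ _ (Submodule.subset_span ⟨p.1, p.2, hp1, by rw [Prod.mk.eta]⟩)
  · intro w
    have hsupp : (Function.support fun i : ℕ => ∏ j, (iotaMap b η hn0 (w j)) (i, j)) ⊆
        ↑(Finset.range (d ^ n + d)) := by
      intro i hi
      simp only [Function.mem_support] at hi
      simp only [Finset.coe_range, Set.mem_Iio]
      by_contra h
      push_neg at h
      apply hi
      apply Finset.prod_eq_zero (Finset.mem_univ (⟨0, hn0⟩ : Fin n))
      rw [iotaMap_apply]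
      simp [gCoef_eq_zero b η hn0 h]
    rw [finsum_eq_sum_of_support_subset _ hsupp, Finset.range_eq_Ico,
      ← Finset.sum_Ico_consecutive _ (Nat.zero_le (d ^ n)) (Nat.le_add_right _ d)]
    have hA : ∑ i ∈ Finset.Ico 0 (d ^ n), (∏ j, (iotaMap b η hn0 (w j)) (i, j)) =
        ∑ f : Fin n → Fin d,
          (η (b ∘ f) - (if n = 1 then (1 : k) else 0)) * ∏ j, b.repr (w j) (f j) := by
      rw [← Finset.range_eq_Ico, ← Fin.sum_univ_eq_sum_range
        (fun i => ∏ j, (iotaMap b η hn0 (w j)) (i, j)),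
        ← Equiv.sum_comp finFunctionFinEquiv
          (fun i : Fin (d ^ n) => ∏ j, (iotaMap b η hn0 (w j)) ((i : ℕ), j))]
      refine Finset.sum_congr rfl fun f _ => ?_
      simp only [iotaMap_apply, gCoef_main, LinearMap.smul_apply, smul_eq_mul,
        Module.Basis.coord_apply]
      rw [Finset.prod_mul_distrib]
      congr 1
      simp
    have hB : ∑ i ∈ Finset.Ico (d ^ n) (d ^ n + d), (∏ j, (iotaMap b η hn0 (w j)) (i, j)) =
        (if n = 1 then (1 : k) else 0) * ∑ f : Fin n → Fin d, ∏ j, b.repr (w j) (f j) := by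
      rw [Finset.sum_Ico_eq_sum_range]
      simp only [Nat.add_sub_cancel_left]
      rw [← Fin.sum_univ_eq_sum_range (fun i => ∏ j, (iotaMap b η hn0 (w j)) (d ^ n + i, j))]
      by_cases h1 : n = 1
      · subst h1
        rw [if_pos rfl, one_mul]
        rw [← Equiv.sum_comp (Equiv.funUnique (Fin 1) (Fin d)).symm
          (fun f : Fin 1 → Fin d => ∏ j, b.repr (w j) (f j))]
        refine Finset.sum_congr rfl fun t _ => ?_
        simp only [iotaMap_apply, gCoef_tail b η hn0 t]
        simp [Equiv.funUnique]
      · have h2 : 1 < n := by omega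
        rw [if_neg h1, zero_mul]
        apply Finset.sum_eq_zero
        intro t _
        apply Finset.prod_eq_zero (Finset.mem_univ (⟨1, h2⟩ : Fin n))
        rw [iotaMap_apply]
        simp only [gCoef_tail b η hn0 t]
        rw [if_neg (by simp [Fin.ext_iff])]
        simp
    rw [hA, hB, eta_expansion b η w, Finset.mul_sum, ← Finset.sum_add_distrib]
    refine Finset.sum_congr rfl fun f _ => ?_
    ring
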